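/- Let G = (V,E) be a finite simple connected graph that is S4 for monophonic convexity. Then the VC dimension of the family ℋm(G) of monophonic halfspaces of G is at least ω(G). -/

import Mathlib

open SimpleGraph

variable {V : Type*}

/-- A walk is an induced (chordless) path. -/
def IsInducedPath (G : SimpleGraph V) {x y : V} (p : G.Walk x y) : Prop :=
  p.IsPath ∧ ∀ a b : V, a ∈ p.support → b ∈ p.support → G.Adj a b → s(a, b) ∈ p.edges

/-- The monophonic interval between `u` and `v`: all vertices on some induced
path between `u` and `v` (empty if `u = v`). -/
def mInterval (G : SimpleGraph V) (u v : V) : Set V :=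
  {z | u ≠ v ∧ ∃ p : G.Walk u v, IsInducedPath G p ∧ z ∈ p.support}

/-- Monophonic convexity. -/
def MConvex (G : SimpleGraph V) (C : Set V) : Prop :=
  ∀ x ∈ C, ∀ y ∈ C, mInterval G x y ⊆ C

/-- Monophonic halfspace. -/
def IsMHalfspace (G : SimpleGraph V) (H : Set V) : Prop :=
  MConvex G H ∧ MConvex G Hᶜ

/-- The monophonic shadow `u/v`. -/
def mShadow (G : SimpleGraph V) (u v : V) : Set V :=
  {z | u ∈ mInterval G z v}

/-- The border `Γ(X)`: vertices of `X` with a neighbour outside `X`. -/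
def border (G : SimpleGraph V) (X : Set V) : Set V :=
  {x | x ∈ X ∧ ∃ y, y ∉ X ∧ G.Adj x y}

/-- `△⁻uv = N(u) ∩ N(v)`. -/
def triMinus (G : SimpleGraph V) (u v : V) : Set V :=
  G.neighborSet u ∩ G.neighborSet v

/-- `△uv = (N(u) ∩ N(v)) ∪ {u, v}`. -/
def triangleSet (G : SimpleGraph V) (u v : V) : Set V :=
  (G.neighborSet u ∩ G.neighborSet v) ∪ {u, v}

/-- `□uv`: vertices appearing in some 4-cycle of `G` having `{u,v}` as an edge. -/
def squareSet (G : SimpleGraph V) (u v : V) : Set V :=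
  {x | ∃ a b : V, G.Adj v a ∧ G.Adj a b ∧ G.Adj b u ∧
    a ≠ u ∧ a ≠ v ∧ b ≠ u ∧ b ≠ v ∧ a ≠ b ∧ (x = u ∨ x = v ∨ x = a ∨ x = b)}

/-- `A = □uv \ △⁻uv`. -/
def setA (G : SimpleGraph V) (u v : V) : Set V :=
  squareSet G u v \ triMinus G u v

/-- `Aᵘ = {x ∈ A : d(x,u) < d(x,v)}`. -/
noncomputable def setAu (G : SimpleGraph V) (u v : V) : Set V :=
  {x ∈ setA G u v | G.dist x u < G.dist x v}

/-- `Aᵛ = A \ Aᵘ`. -/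
noncomputable def setAv (G : SimpleGraph V) (u v : V) : Set V :=
  setA G u v \ setAu G u v

/-- The graph obtained from `G` by deleting all edges of the induced subgraph `G[S]`. -/
def delInduced (G : SimpleGraph V) (S : Set V) : SimpleGraph V where
  Adj a b := G.Adj a b ∧ ¬(a ∈ S ∧ b ∈ S)
  symm := by
    refine ⟨?_⟩
    intro a b h
    exact ⟨h.1.symm, fun hc => h.2 ⟨hc.2, hc.1⟩⟩
  loopless := ⟨fun a h => G.loopless.irrefl a h.1⟩

/-- The graph `T = G \ E(G[□uv ∪ △⁻uv])`. -/
def graphT (G : SimpleGraph V) (u v : V) : SimpleGraph V :=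
  delInduced G (squareSet G u v ∪ triMinus G u v)

/-- The monophonic convex hull of `X`. -/
def mHull (G : SimpleGraph V) (X : Set V) : Set V :=
  ⋂₀ {C | MConvex G C ∧ X ⊆ C}

/-- `S` is an `(a,b)`-separator: every walk from `a` to `b` meets `S`. -/
def IsSeparator (G : SimpleGraph V) (S : Set V) (a b : V) : Prop :=
  ∀ p : G.Walk a b, ∃ s ∈ S, s ∈ p.support

/-- The cutset `δ(X)` as a set of edges. -/
def cutset (G : SimpleGraph V) (X : Set V) : Set (Sym2 V) :=
  {e | e ∈ G.edgeSet ∧ ∃ a b : V, e = s(a, b) ∧ a ∈ X ∧ b ∉ X}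

/-- A family of sets `ℋ` shatters a set `S`. -/
def Shatters (ℋ : Set (Set V)) (S : Set V) : Prop :=
  ∀ T ⊆ S, ∃ H ∈ ℋ, H ∩ S = T

/-- `G` is `S₄` for monophonic convexity: disjoint m-convex sets are
halfspace separable. -/
def IsS4 (G : SimpleGraph V) : Prop :=
  ∀ C₁ C₂ : Set V, MConvex G C₁ → MConvex G C₂ → Disjoint C₁ C₂ →
    ∃ H : Set V, IsMHalfspace G H ∧ C₁ ⊆ H ∧ C₂ ⊆ Hᶜ


lemma mInterval_adj_subset {G : SimpleGraph V} {u v : V} (h : G.Adj u v) :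
    mInterval G u v ⊆ {u, v} := by
  rintro z ⟨hne, p, ⟨hp, hind⟩, hz⟩
  have hedge : s(u, v) ∈ p.edges :=
    hind u v p.start_mem_support p.end_mem_support h
  cases p with
  | nil => simp at hedge
  | cons hadj q =>
    rename_i w
    rw [SimpleGraph.Walk.edges_cons, List.mem_cons] at hedge
    rcases hedge with heq | hmem
    · have hwv : w = v := by
        rw [Sym2.eq_iff] at heq
        rcases heq with ⟨-, h2⟩ | ⟨h1, -⟩
        · exact h2.symm
        · exact absurd h1.symm (G.ne_of_adj hadj.symm)
      subst hwv
      have hq : q = SimpleGraph.Walk.nil :=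
        (SimpleGraph.Walk.isPath_iff_eq_nil (p := q)).mp
          (((SimpleGraph.Walk.cons_isPath_iff _ _).mp hp).1)
      subst hq
      simpa using hz
    · exact absurd (SimpleGraph.Walk.fst_mem_support_of_mem_edges q hmem)
        (((SimpleGraph.Walk.cons_isPath_iff _ _).mp hp).2)

lemma mconvex_of_subset_clique {G : SimpleGraph V} {K : Finset V}
    (hK : G.IsClique (K : Set V)) {T : Set V} (hT : T ⊆ (K : Set V)) :
    MConvex G T := by
  intro x hx y hy z hz
  have hne : x ≠ y := hz.1
  have hadj : G.Adj x y := hK (hT hx) (hT hy) hne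
  rcases mInterval_adj_subset hadj hz with rfl | rfl
  · exact hx
  · simpa using hy

/-- if `G` is `S₄` for monophonic convexity, the VC dimension of
its monophonic halfspaces is at least `ω(G)`: some shattered set has
cardinality at least `ω(G)`. -/
theorem vc_dim_mhalfspaces_ge [Fintype V] (G : SimpleGraph V) (hG : G.Connected)
    (hS4 : IsS4 G) :
    ∃ S : Finset V, Shatters {H : Set V | IsMHalfspace G H} (S : Set V) ∧
      G.cliqueNum ≤ S.card := by
  obtain ⟨K, hK⟩ := G.exists_isNClique_cliqueNum
  refine ⟨K, ?_, hK.card_eq.ge⟩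
  intro T hT
  have hTc : MConvex G T := mconvex_of_subset_clique hK.isClique hT
  have hT2 : MConvex G ((K : Set V) \ T) :=
    mconvex_of_subset_clique hK.isClique Set.diff_subset
  have hdisj : Disjoint T ((K : Set V) \ T) :=
    Set.disjoint_left.mpr fun a ha hb => hb.2 ha
  obtain ⟨H, hH, hTH, hKT⟩ := hS4 T ((K : Set V) \ T) hTc hT2 hdisj
  refine ⟨H, hH, ?_⟩
  ext z
  constructor
  · rintro ⟨hzH, hzK⟩
    by_contra hzT
    exact hKT ⟨hzK, hzT⟩ hzH
  · intro hzT
    exact ⟨hTH hzT, hT hzT⟩
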